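/- Let K be a field, (R, 𝔪) a parameter K-algebra, and M a flat and 𝔪-adically complete R-module. Set M₀ := M/𝔪M, regarded as a K-module, and let σ : M₀ → M be any K-linear map such that the composite of σ with the canonical surjection M → M₀ is the identity of M₀. Then the induced R-linear map from the 𝔪-adic completion of R ⊗_K M₀ to M — namely the limit over i of the maps (R/𝔪^{i+1}) ⊗_K M₀ → M/𝔪^{i+1}M induced by r ⊗ x ↦ r·σ(x), followed by the inverse of the canonical bijection M → lim_i M/𝔪^{i+1}M — is bijective. -/

import Mathlib

open IsLocalRing TensorProduct

section Aux

variable {K R : Type} [Field K] [CommRing R] [Algebra K R]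
variable (I : Ideal R)
variable {M : Type} [AddCommGroup M] [Module R M] [Module K M] [IsScalarTower K R M]

/-- Scalars on `M ⧸ I•⊤` only depend on the residue mod `I`. -/
lemma aux_smul_quot (r : R) (k : K) (h : algebraMap K (R ⧸ I) k = Ideal.Quotient.mk I r)
    (x : M ⧸ (I • ⊤ : Submodule R M)) : r • x = k • x := by
  obtain ⟨m, rfl⟩ := Submodule.Quotient.mk_surjective _ x
  have hk : k • (Submodule.Quotient.mk (p := (I • ⊤ : Submodule R M)) m)
      = Submodule.Quotient.mk (p := (I • ⊤ : Submodule R M)) ((algebraMap K R k) • m) := by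
    rw [← Submodule.Quotient.mk_smul, algebraMap_smul]
  rw [hk, ← Submodule.Quotient.mk_smul]
  rw [Submodule.Quotient.eq]
  have hmem : r - algebraMap K R k ∈ I := by
    have : Ideal.Quotient.mk I (r - algebraMap K R k) = 0 := by
      rw [map_sub, Ideal.Quotient.mk_algebraMap, h, sub_self]
    exact (Ideal.Quotient.eq_zero_iff_mem).mp this
  have : r • m - (algebraMap K R k) • m = (r - algebraMap K R k) • m := by
    rw [sub_smul]
  rw [this]
  exact Submodule.smul_mem_smul hmem Submodule.mem_top

lemma auxA [Module.Flat R M]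
    (hres : Function.Bijective (algebraMap K (R ⧸ I)))
    {ι : Type} (b : Module.Basis ι K (M ⧸ (I • ⊤ : Submodule R M)))
    (σ : (M ⧸ (I • ⊤ : Submodule R M)) →ₗ[K] M)
    (hσ : ∀ x, (I • ⊤ : Submodule R M).mkQ (σ x) = x) :
    ∀ (n : ℕ) (s : Finset ι) (r : ι → R),
      (∑ i ∈ s, r i • σ (b i)) ∈ (I ^ n • ⊤ : Submodule R M) →
      ∀ i ∈ s, r i ∈ I ^ n := by
  classical
  set lft : R → K := fun t => (Equiv.ofBijective _ hres).symm (Ideal.Quotient.mk I t) with hlft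
  have h1 : ∀ t : R, algebraMap K (R ⧸ I) (lft t) = Ideal.Quotient.mk I t := fun t =>
    (Equiv.ofBijective _ hres).apply_symm_apply (Ideal.Quotient.mk I t)
  have h2 : ∀ t : R, t - algebraMap K R (lft t) ∈ I := by
    intro t
    have : Ideal.Quotient.mk I (t - algebraMap K R (lft t)) = 0 := by
      rw [map_sub, Ideal.Quotient.mk_algebraMap, h1, sub_self]
    exact (Ideal.Quotient.eq_zero_iff_mem).mp this
  intro n
  induction n with
  | zero =>
    intro s r _ i _
    simp [Ideal.one_eq_top]
  | succ n ih =>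
    intro s r hmem i₀ hi₀
    have hrn : ∀ i ∈ s, r i ∈ I ^ n :=
      ih s r (Submodule.smul_mono_left (Ideal.pow_le_pow_right (Nat.le_succ n)) hmem)
    have hmem' : (∑ i ∈ s, r i • σ (b i)) ∈ I ^ (n + 1) • Submodule.span R (Set.range (id : M → M)) := by
      rwa [Set.range_id, Submodule.span_univ]
    obtain ⟨a, ha, hsum⟩ :=
      (Submodule.mem_ideal_smul_span_iff_exists_sum (I ^ (n + 1)) id _).mp hmem'
    set F : (↥s ⊕ ↥a.support) → R := Sum.elim (fun i => r i) (fun m => -(a m)) with hF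
    set X : (↥s ⊕ ↥a.support) → M := Sum.elim (fun i => σ (b i)) (fun m => (m : M)) with hXdef
    have hrel : ∑ j, F j • X j = 0 := by
      rw [Fintype.sum_sum_type]
      have e1 : ∑ i : ↥s, F (Sum.inl i) • X (Sum.inl i) = ∑ i ∈ s, r i • σ (b i) := by
        rw [← Finset.sum_attach s (fun i => r i • σ (b i))]; rfl
      have e2 : ∑ m : ↥a.support, F (Sum.inr m) • X (Sum.inr m)
          = -(∑ m ∈ a.support, a m • (m : M)) := by
        rw [← Finset.sum_neg_distrib, ← Finset.sum_attach a.support (fun m => -(a m • (m : M)))]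
        simp [F, X, neg_smul]
      rw [e1, e2]
      have e3 : (a.sum fun m c => c • id m) = ∑ m ∈ a.support, a m • (m : M) := rfl
      rw [← e3, hsum]
      simp
    obtain ⟨κ, A, y, hXr, hFr⟩ := Module.Flat.isTrivialRelation_of_sum_smul_eq_zero hrel
    have hcoef : ∀ j : Fin κ, (∑ i : ↥s, r ↑i * A (Sum.inl i) j) ∈ I ^ (n + 1) := by
      intro j
      have h0 := hFr j
      rw [Fintype.sum_sum_type] at h0
      simp only [F, Sum.elim_inl, Sum.elim_inr, neg_mul, Finset.sum_neg_distrib] at h0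
      have heq := add_neg_eq_zero.mp h0
      rw [heq]
      exact Submodule.sum_mem _ fun m _ => Ideal.mul_mem_right _ _ (ha m)
    have hquot : ∀ i : ↥s, (b ↑i : M ⧸ (I • ⊤ : Submodule R M))
        = ∑ j, lft (A (Sum.inl i) j) •
            Submodule.Quotient.mk (p := (I • ⊤ : Submodule R M)) (y j) := by
      intro i
      have hq := congrArg ((I • ⊤ : Submodule R M).mkQ) (hXr (Sum.inl i))
      simp only [X, Sum.elim_inl, hσ, map_sum, map_smul] at hq
      rw [hq]
      exact Finset.sum_congr rfl fun j _ => aux_smul_quot I _ _ (h1 _) _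
    have hdelta : ∀ i : ↥s,
        (if (i : ι) = i₀ then (1 : K) else 0)
          = ∑ j, lft (A (Sum.inl i) j) *
              (b.repr (Submodule.Quotient.mk (p := (I • ⊤ : Submodule R M)) (y j)) i₀) := by
      intro i
      have hq := congrArg (fun z => (b.repr z) i₀) (hquot i)
      simpa [Module.Basis.repr_self, Finsupp.single_apply, map_sum, Finsupp.finset_sum_apply,
        Finsupp.smul_apply, smul_eq_mul] using hq
    have key : ∀ j : Fin κ,
        (∑ i : ↥s, r ↑i * algebraMap K R (lft (A (Sum.inl i) j))) ∈ I ^ (n + 1) := by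
      intro j
      have hsplit : ∑ i : ↥s, r ↑i * algebraMap K R (lft (A (Sum.inl i) j))
          = (∑ i : ↥s, r ↑i * A (Sum.inl i) j)
            - ∑ i : ↥s, r ↑i * (A (Sum.inl i) j - algebraMap K R (lft (A (Sum.inl i) j))) := by
        rw [← Finset.sum_sub_distrib]
        exact Finset.sum_congr rfl fun i _ => by ring
      rw [hsplit]
      refine sub_mem (hcoef j) (Submodule.sum_mem _ fun i _ => ?_)
      have hm : r ↑i * (A (Sum.inl i) j - algebraMap K R (lft (A (Sum.inl i) j))) ∈ I ^ n * I :=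
        Ideal.mul_mem_mul (hrn _ i.2) (h2 _)
      rwa [← pow_succ] at hm
    have e0 : r i₀ = ∑ i : ↥s, r ↑i * algebraMap K R (if (i : ι) = i₀ then (1 : K) else 0) := by
      rw [Finset.sum_eq_single_of_mem (⟨i₀, hi₀⟩ : ↥s) (Finset.mem_univ _)]
      · simp
      · intro i _ hne
        have hni : ¬((i : ι) = i₀) := fun h => hne (Subtype.ext h)
        simp [hni]
    have e1 : ∀ i : ↥s, algebraMap K R (if (i : ι) = i₀ then (1 : K) else 0)
        = ∑ j, algebraMap K R (lft (A (Sum.inl i) j)) *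
            algebraMap K R (b.repr (Submodule.Quotient.mk (p := (I • ⊤ : Submodule R M)) (y j)) i₀) := by
      intro i
      rw [hdelta i, map_sum]
      exact Finset.sum_congr rfl fun j _ => by rw [map_mul]
    have e2 : ∑ i : ↥s, r ↑i * algebraMap K R (if (i : ι) = i₀ then (1 : K) else 0)
        = ∑ j, (∑ i : ↥s, r ↑i * algebraMap K R (lft (A (Sum.inl i) j))) *
            algebraMap K R (b.repr (Submodule.Quotient.mk (p := (I • ⊤ : Submodule R M)) (y j)) i₀) := by
      simp_rw [e1, Finset.mul_sum, Finset.sum_mul]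
      rw [Finset.sum_comm]
      exact Finset.sum_congr rfl fun j _ => Finset.sum_congr rfl fun i _ => by ring
    rw [e0, e2]
    exact Submodule.sum_mem _ fun j _ => Ideal.mul_mem_right _ _ (key j)

end Aux

/-- Let `(R, 𝔪)` be a parameter `K`-algebra and `M` a flat and `𝔪`-adically
complete `R`-module.  Let `M₀ := M/𝔪M`, and let `σ : M₀ → M` be any `K`-linear splitting of the
canonical surjection `M → M₀`.  Then the induced `R`-linear map from the `𝔪`-adic completion of
`R ⊗_K M₀` to `M` is bijective. -/
theorem statement1
    (K : Type) [Field K]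
    (R : Type) [CommRing R] [Algebra K R] [IsNoetherianRing R] [IsLocalRing R]
    (hcomplete : IsAdicComplete (maximalIdeal R) R)
    (hres : Function.Bijective (algebraMap K (R ⧸ maximalIdeal R)))
    (M : Type) [AddCommGroup M] [Module R M] [Module K M] [IsScalarTower K R M]
    (hflat : Module.Flat R M) (hMcomplete : IsAdicComplete (maximalIdeal R) M)
    (σ : (M ⧸ (maximalIdeal R • ⊤ : Submodule R M)) →ₗ[K] M)
    (hσ : ∀ x, (maximalIdeal R • ⊤ : Submodule R M).mkQ (σ x) = x) :
    ∀ f : (R ⊗[K] (M ⧸ (maximalIdeal R • ⊤ : Submodule R M))) →ₗ[R] M,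
      (∀ (r : R) (x : M ⧸ (maximalIdeal R • ⊤ : Submodule R M)),
        f (r ⊗ₜ[K] x) = r • σ x) →
      ∀ g : AdicCompletion (maximalIdeal R)
          (R ⊗[K] (M ⧸ (maximalIdeal R • ⊤ : Submodule R M))) →ₗ[R] M,
        (∀ y, AdicCompletion.of (maximalIdeal R) M (g y)
            = AdicCompletion.map (maximalIdeal R) f y) →
        Function.Bijective g := by
  classical
  intro f hf g hg
  haveI := hflat
  let b : Module.Basis (↥(Module.Basis.ofVectorSpaceIndex K (M ⧸ (maximalIdeal R • ⊤ : Submodule R M)))) K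
      (M ⧸ (maximalIdeal R • ⊤ : Submodule R M)) := Module.Basis.ofVectorSpace K _
  let bN : Module.Basis _ R (R ⊗[K] (M ⧸ (maximalIdeal R • ⊤ : Submodule R M))) := b.baseChange R
  -- level-wise injectivity
  have hinjlvl : ∀ (n : ℕ) (w : R ⊗[K] (M ⧸ (maximalIdeal R • ⊤ : Submodule R M))),
      f w ∈ (maximalIdeal R ^ n • ⊤ : Submodule R M) →
      w ∈ (maximalIdeal R ^ n • ⊤ :
        Submodule R (R ⊗[K] (M ⧸ (maximalIdeal R • ⊤ : Submodule R M)))) := by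
    intro n w hw
    have hw' : w = ∑ i ∈ (bN.repr w).support, bN.repr w i • bN i := by
      conv_lhs => rw [← bN.linearCombination_repr w]
      rw [Finsupp.linearCombination_apply]
      rfl
    have hfw : f w = ∑ i ∈ (bN.repr w).support, (bN.repr w i) • σ (b i) := by
      conv_lhs => rw [hw']
      rw [map_sum]
      refine Finset.sum_congr rfl fun i _ => ?_
      rw [map_smul, Module.Basis.baseChange_apply, hf, one_smul]
    rw [hfw] at hw
    have hco := auxA (maximalIdeal R) hres b σ hσ n _ _ hw
    rw [hw']
    exact Submodule.sum_mem _ fun i hi =>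
      Submodule.smul_mem_smul (hco i hi) Submodule.mem_top
  have hinj : ∀ n : ℕ, Function.Injective (f.reduceModIdeal (maximalIdeal R ^ n)) := by
    intro n x y hxy
    obtain ⟨w, rfl⟩ := Submodule.Quotient.mk_surjective _ x
    obtain ⟨v, rfl⟩ := Submodule.Quotient.mk_surjective _ y
    rw [LinearMap.reduceModIdeal_apply, LinearMap.reduceModIdeal_apply,
      Submodule.Quotient.eq, ← map_sub] at hxy
    rw [Submodule.Quotient.eq]
    exact hinjlvl n _ hxy
  -- level-wise surjectivity
  have hrange : (⊤ : Submodule R M)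
      ≤ LinearMap.range f ⊔ (maximalIdeal R • ⊤ : Submodule R M) := by
    intro m _
    have h1 : m - σ ((maximalIdeal R • ⊤ : Submodule R M).mkQ m)
        ∈ (maximalIdeal R • ⊤ : Submodule R M) := by
      rw [← Submodule.Quotient.mk_eq_zero (maximalIdeal R • ⊤ : Submodule R M)]
      have h0 : ((maximalIdeal R • ⊤ : Submodule R M).mkQ)
          (m - σ ((maximalIdeal R • ⊤ : Submodule R M).mkQ m)) = 0 := by
        rw [map_sub, hσ]
        simp
      simpa using h0
    have h2 : σ ((maximalIdeal R • ⊤ : Submodule R M).mkQ m) ∈ LinearMap.range f :=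
      ⟨(1 : R) ⊗ₜ[K] _, by rw [hf, one_smul]⟩
    have h3 := Submodule.add_mem_sup h2 h1
    simpa using h3
  have hsub : ∀ n : ℕ, (⊤ : Submodule R M)
      ≤ LinearMap.range f ⊔ (maximalIdeal R ^ n • ⊤ : Submodule R M) := by
    intro n
    induction n with
    | zero =>
      rw [pow_zero, Ideal.one_eq_top, Submodule.top_smul]
      exact le_sup_right
    | succ n ih =>
      have hstep : (maximalIdeal R ^ n • ⊤ : Submodule R M)
          ≤ LinearMap.range f ⊔ (maximalIdeal R ^ (n + 1) • ⊤ : Submodule R M) := by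
        calc (maximalIdeal R ^ n • ⊤ : Submodule R M)
            ≤ maximalIdeal R ^ n •
                (LinearMap.range f ⊔ (maximalIdeal R • ⊤ : Submodule R M)) :=
              Submodule.smul_mono le_rfl hrange
          _ = maximalIdeal R ^ n • LinearMap.range f
              ⊔ maximalIdeal R ^ n • (maximalIdeal R • ⊤ : Submodule R M) :=
              Submodule.smul_sup _ _ _
          _ ≤ LinearMap.range f ⊔ (maximalIdeal R ^ (n + 1) • ⊤ : Submodule R M) := by
              refine sup_le_sup Submodule.smul_le_right (le_of_eq ?_)
              rw [← mul_smul, ← pow_succ]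
      exact le_trans ih (sup_le le_sup_left hstep)
  have hsurj : ∀ n : ℕ, Function.Surjective (f.reduceModIdeal (maximalIdeal R ^ n)) := by
    intro n x
    obtain ⟨m, rfl⟩ := Submodule.Quotient.mk_surjective _ x
    obtain ⟨u, ⟨w, rfl⟩, v, hv, hm⟩ := Submodule.mem_sup.mp (hsub n Submodule.mem_top : m ∈ _)
    refine ⟨Submodule.Quotient.mk w, ?_⟩
    rw [LinearMap.reduceModIdeal_apply, Submodule.Quotient.eq]
    have h4 : f w - m = -v := by rw [← hm]; abel
    rw [h4]
    exact Submodule.neg_mem _ hv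
  -- `of` is bijective
  have hof : Function.Bijective (AdicCompletion.of (maximalIdeal R) M) := by
    constructor
    · intro x y hxy
      have hsml : ∀ n : ℕ, x - y ≡ 0 [SMOD (maximalIdeal R ^ n • ⊤ : Submodule R M)] := by
        intro n
        rw [SModEq.zero]
        have h5 := congrArg (fun z => AdicCompletion.eval (maximalIdeal R) M n z) hxy
        simp only [AdicCompletion.eval_of] at h5
        exact (Submodule.Quotient.eq _).mp (by simpa using h5)
      exact sub_eq_zero.mp (hMcomplete.haus' (x - y) hsml)
    · intro z
      obtain ⟨aseq, rfl⟩ := AdicCompletion.mk_surjective (maximalIdeal R) M z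
      obtain ⟨L, hL⟩ := hMcomplete.prec' aseq aseq.property
      refine ⟨L, AdicCompletion.ext fun n => ?_⟩
      have h6 := (hL n).symm
      rw [SModEq.def] at h6
      simpa using h6
  -- the equivalences at each level
  let e : ∀ n : ℕ, (R ⊗[K] (M ⧸ (maximalIdeal R • ⊤ : Submodule R M)))
        ⧸ (maximalIdeal R ^ n • ⊤ :
            Submodule R (R ⊗[K] (M ⧸ (maximalIdeal R • ⊤ : Submodule R M))))
      ≃ (M ⧸ (maximalIdeal R ^ n • ⊤ : Submodule R M)) :=
    fun n => Equiv.ofBijective _ ⟨hinj n, hsurj n⟩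
  constructor
  · intro y y' hyy
    have hmap : AdicCompletion.map (maximalIdeal R) f y
        = AdicCompletion.map (maximalIdeal R) f y' := by
      rw [← hg, ← hg, hyy]
    refine AdicCompletion.ext fun n => hinj n ?_
    have h7 := congrArg (fun z => AdicCompletion.eval (maximalIdeal R) _ n z) hmap
    simpa [AdicCompletion.eval_apply, AdicCompletion.map_val_apply] using h7
  · intro m
    have hcompat : ∀ {k n : ℕ} (hkn : k ≤ n),
        AdicCompletion.transitionMap (maximalIdeal R)
            (R ⊗[K] (M ⧸ (maximalIdeal R • ⊤ : Submodule R M))) hkn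
          ((e n).symm ((AdicCompletion.of (maximalIdeal R) M m).val n))
        = (e k).symm ((AdicCompletion.of (maximalIdeal R) M m).val k) := by
      intro k n hkn
      apply hinj k
      have h1 : (f.reduceModIdeal (maximalIdeal R ^ k))
          (AdicCompletion.transitionMap (maximalIdeal R) _ hkn
            ((e n).symm ((AdicCompletion.of (maximalIdeal R) M m).val n)))
          = AdicCompletion.transitionMap (maximalIdeal R) M hkn
            ((f.reduceModIdeal (maximalIdeal R ^ n))
              ((e n).symm ((AdicCompletion.of (maximalIdeal R) M m).val n))) := by
        have h8 := congrArg
          (fun h => h ((e n).symm ((AdicCompletion.of (maximalIdeal R) M m).val n)))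
          (AdicCompletion.transitionMap_comp_reduceModIdeal (maximalIdeal R) f hkn)
        simpa using h8.symm
      have h2 : (f.reduceModIdeal (maximalIdeal R ^ n))
          ((e n).symm ((AdicCompletion.of (maximalIdeal R) M m).val n))
          = (AdicCompletion.of (maximalIdeal R) M m).val n := (e n).apply_symm_apply _
      have h3 : (f.reduceModIdeal (maximalIdeal R ^ k))
          ((e k).symm ((AdicCompletion.of (maximalIdeal R) M m).val k))
          = (AdicCompletion.of (maximalIdeal R) M m).val k := (e k).apply_symm_apply _
      rw [h1, h2, h3]
      simp only [AdicCompletion.of_apply, Submodule.mkQ_apply]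
      exact rfl
    refine ⟨⟨fun n => (e n).symm ((AdicCompletion.of (maximalIdeal R) M m).val n),
      fun {k n} hkn => hcompat hkn⟩, hof.1 ?_⟩
    refine (hg _).trans ?_
    refine AdicCompletion.ext fun n => ?_
    refine (AdicCompletion.map_val_apply _ f _).trans ?_
    exact (e n).apply_symm_apply _
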